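/- For each ε ∈ (0,1], let (u_ε, v_ε) solve the ODE system with initial data u_ε(0) = exp(φ⁰_ε/ε) and v_ε(0) = v⁰_ε, where v⁰_ε < μ for all ε, φ⁰_ε → φ⁰ < 0 and v⁰_ε → v⁰ < μ as ε → 0. Then: (a) for every t ≥ 0 and every ε, u_ε(t) ≤ exp((φ⁰_ε + (v⁰_ε − μ)t)/ε); (b) for every t > 0, u_ε(t) → 0 as ε → 0; (c) for every t ≥ 0, v_ε(t) → v⁰ as ε → 0. -/

import Mathlib

open Real Filter Topology

/-- `(u, v)` solves the ODE system `u' = ε⁻¹ u (v - μ)`, `v' = -u v` on `[0, ∞)`,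
with both components positive. -/
structure IsODESol (μ ε : ℝ) (u v : ℝ → ℝ) : Prop where
  u_pos : ∀ t, 0 ≤ t → 0 < u t
  v_pos : ∀ t, 0 ≤ t → 0 < v t
  u_eq : ∀ t, 0 ≤ t → HasDerivAt u (ε⁻¹ * u t * (v t - μ)) t
  v_eq : ∀ t, 0 ≤ t → HasDerivAt v (-(u t * v t)) t



-- helper: antitone from HasDerivAt nonpos on Ici 0
lemma antitoneOn_Ici_of_hasDerivAt {f f' : ℝ → ℝ}
    (hf : ∀ t, 0 ≤ t → HasDerivAt f (f' t) t) (hf' : ∀ t, 0 ≤ t → f' t ≤ 0) :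
    AntitoneOn f (Set.Ici 0) := by
  apply antitoneOn_of_deriv_nonpos (convex_Ici 0)
  · exact fun t ht => ((hf t ht).continuousAt).continuousWithinAt
  · intro t ht
    rw [interior_Ici] at ht
    exact ((hf t (le_of_lt ht)).differentiableAt).differentiableWithinAt
  · intro t ht
    rw [interior_Ici] at ht
    rw [(hf t (le_of_lt ht)).deriv]
    exact hf' t (le_of_lt ht)

lemma key {μ ε : ℝ} (hε : 0 < ε) {u v : ℝ → ℝ} (h : IsODESol μ ε u v)
    (hv0 : v 0 ≤ μ) :
    (∀ t, 0 ≤ t → Real.log (u t) ≤ Real.log (u 0) + ε⁻¹ * (v 0 - μ) * t) ∧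
    (∀ t, 0 ≤ t → |v t - v 0| ≤ v 0 * u 0 * t) := by
  -- v is antitone
  have hvmono : AntitoneOn v (Set.Ici 0) := by
    refine antitoneOn_Ici_of_hasDerivAt h.v_eq ?_
    intro t ht
    have := mul_pos (h.u_pos t ht) (h.v_pos t ht)
    linarith
  -- log bound
  have hlog : ∀ t, 0 ≤ t → Real.log (u t) ≤ Real.log (u 0) + ε⁻¹ * (v 0 - μ) * t := by
    intro t ht
    have hmono : AntitoneOn (fun s => Real.log (u s) - ε⁻¹ * (v 0 - μ) * s) (Set.Ici 0) := by
      refine antitoneOn_Ici_of_hasDerivAt (f' := fun s => ε⁻¹ * (v s - v 0)) ?_ ?_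
      · intro s hs
        have h1 : HasDerivAt (fun s => Real.log (u s))
            ((ε⁻¹ * u s * (v s - μ)) / u s) s :=
          (h.u_eq s hs).log (ne_of_gt (h.u_pos s hs))
        have h2 : HasDerivAt (fun s => ε⁻¹ * (v 0 - μ) * s) (ε⁻¹ * (v 0 - μ)) s := by
          simpa using (hasDerivAt_id s).const_mul (ε⁻¹ * (v 0 - μ))
        have := h1.sub h2
        have hu := ne_of_gt (h.u_pos s hs)
        have e : ε⁻¹ * u s * (v s - μ) / u s = ε⁻¹ * (v s - μ) := by
          rw [mul_comm ε⁻¹ (u s), mul_assoc, mul_div_cancel_left₀ _ hu]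
        exact this.congr_deriv (show ε⁻¹ * u s * (v s - μ) / u s - ε⁻¹ * (v 0 - μ)
          = ε⁻¹ * (v s - v 0) by rw [e]; ring)
      · intro s hs
        have : v s ≤ v 0 := hvmono (Set.self_mem_Ici) hs hs
        have : v s - v 0 ≤ 0 := by linarith
        have hi : (0:ℝ) ≤ ε⁻¹ := le_of_lt (inv_pos.2 hε)
        exact mul_nonpos_of_nonneg_of_nonpos hi this
    have := hmono (Set.self_mem_Ici) ht ht
    simp only [mul_zero, sub_zero] at this
    linarith
  refine ⟨hlog, ?_⟩
  -- u t ≤ u 0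
  have hule : ∀ t, 0 ≤ t → u t ≤ u 0 := by
    intro t ht
    have h1 := hlog t ht
    have h2 : ε⁻¹ * (v 0 - μ) * t ≤ 0 := by
      have hi : (0:ℝ) ≤ ε⁻¹ := le_of_lt (inv_pos.2 hε)
      have : v 0 - μ ≤ 0 := by linarith
      have := mul_nonpos_of_nonneg_of_nonpos hi this
      exact mul_nonpos_of_nonpos_of_nonneg this ht
    have h3 : Real.log (u t) ≤ Real.log (u 0) := by linarith
    calc u t = Real.exp (Real.log (u t)) := (Real.exp_log (h.u_pos t ht)).symm
      _ ≤ Real.exp (Real.log (u 0)) := Real.exp_le_exp.2 h3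
      _ = u 0 := Real.exp_log (h.u_pos 0 le_rfl)
  -- Lipschitz bound for v
  intro t ht
  have := Convex.norm_image_sub_le_of_norm_hasDerivWithin_le
    (f := v) (f' := fun s => -(u s * v s)) (C := v 0 * u 0) (s := Set.Ici 0)
    (fun s hs => (h.v_eq s hs).hasDerivWithinAt)
    (fun s hs => by
      have hs' : (0:ℝ) ≤ s := hs
      rw [Real.norm_eq_abs, abs_neg, abs_of_nonneg
        (le_of_lt (mul_pos (h.u_pos s hs') (h.v_pos s hs')))]
      have h1 : u s ≤ u 0 := hule s hs'
      have h2 : v s ≤ v 0 := hvmono Set.self_mem_Ici hs' hs'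
      have h3 : 0 < u s := h.u_pos s hs'
      have h4 : 0 < v s := h.v_pos s hs'
      calc u s * v s ≤ u 0 * v 0 := by nlinarith
        _ = v 0 * u 0 := mul_comm _ _)
    (convex_Ici 0) Set.self_mem_Ici ht
  rw [Real.norm_eq_abs, Real.norm_eq_abs, sub_zero, abs_of_nonneg ht] at this
  exact this

/-- The case `v⁰ < μ` of Theorem 2.1: (a) `u_ε(t) ≤ exp((φ⁰_ε + (v⁰_ε - μ)t)/ε)`,
(b) `u_ε(t) → 0` for `t > 0`, and (c) `v_ε(t) → v⁰` for every `t ≥ 0`, as `ε → 0`. -/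
theorem below_threshold_limit (μ : ℝ) (hμ : 0 < μ)
    (u v : ℝ → ℝ → ℝ) (φ0 v0 : ℝ → ℝ) (φlim vlim : ℝ)
    (hsol : ∀ ε ∈ Set.Ioc (0:ℝ) 1, IsODESol μ ε (u ε) (v ε))
    (hu0 : ∀ ε ∈ Set.Ioc (0:ℝ) 1, u ε 0 = Real.exp (φ0 ε / ε))
    (hv0 : ∀ ε ∈ Set.Ioc (0:ℝ) 1, v ε 0 = v0 ε)
    (hv0μ : ∀ ε ∈ Set.Ioc (0:ℝ) 1, v0 ε < μ)
    (hφconv : Tendsto φ0 (nhdsWithin 0 (Set.Ioc 0 1)) (𝓝 φlim))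
    (hφneg : φlim < 0)
    (hvconv : Tendsto v0 (nhdsWithin 0 (Set.Ioc 0 1)) (𝓝 vlim))
    (hvlim : vlim < μ) :
    (∀ ε ∈ Set.Ioc (0:ℝ) 1, ∀ t, 0 ≤ t →
        u ε t ≤ Real.exp ((φ0 ε + (v0 ε - μ) * t) / ε)) ∧
    (∀ t, 0 < t →
        Tendsto (fun ε => u ε t) (nhdsWithin 0 (Set.Ioc 0 1)) (𝓝 0)) ∧
    (∀ t, 0 ≤ t →
        Tendsto (fun ε => v ε t) (nhdsWithin 0 (Set.Ioc 0 1)) (𝓝 vlim)) := by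
    -- limit facts
  have hεpos : ∀ᶠ ε in nhdsWithin 0 (Set.Ioc 0 1), ε ∈ Set.Ioc (0:ℝ) 1 :=
    self_mem_nhdsWithin
  have hinv : Tendsto (fun ε : ℝ => ε⁻¹) (nhdsWithin 0 (Set.Ioc 0 1)) atTop :=
    tendsto_inv_nhdsGT_zero.mono_left
      (nhdsWithin_mono 0 (fun x hx => hx.1))
  have hratio : Tendsto (fun ε => φ0 ε / ε) (nhdsWithin 0 (Set.Ioc 0 1)) atBot := by
    have h1 : ∀ᶠ ε in nhdsWithin 0 (Set.Ioc 0 1), φ0 ε < φlim / 2 :=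
      hφconv.eventually (gt_mem_nhds (by linarith))
    have h2 : Tendsto (fun ε : ℝ => φlim / 2 * ε⁻¹) (nhdsWithin 0 (Set.Ioc 0 1)) atBot := by
      have := hinv.const_mul_atTop_of_neg (by linarith : φlim / 2 < 0)
      exact this
    apply tendsto_atBot_mono' _ _ h2
    filter_upwards [h1, hεpos] with ε hφ hε
    rw [div_eq_mul_inv]
    exact mul_le_mul_of_nonneg_right (le_of_lt hφ) (le_of_lt (inv_pos.2 hε.1))
  have hexp0 : Tendsto (fun ε => Real.exp (φ0 ε / ε)) (nhdsWithin 0 (Set.Ioc 0 1)) (𝓝 0) :=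
    Real.tendsto_exp_atBot.comp hratio
  -- part (a)
  have parta : ∀ ε ∈ Set.Ioc (0:ℝ) 1, ∀ t, 0 ≤ t →
      u ε t ≤ Real.exp ((φ0 ε + (v0 ε - μ) * t) / ε) := by
    intro ε hε t ht
    have hεp : 0 < ε := hε.1
    have hv00 : v ε 0 = v0 ε := hv0 ε hε
    have hμ0 : v ε 0 ≤ μ := by rw [hv00]; exact le_of_lt (hv0μ ε hε)
    have hk := (key hεp (hsol ε hε) hμ0).1 t ht
    have hlogu0 : Real.log (u ε 0) = φ0 ε / ε := by
      rw [hu0 ε hε, Real.log_exp]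
    rw [hlogu0, hv00] at hk
    calc u ε t = Real.exp (Real.log (u ε t)) :=
          (Real.exp_log ((hsol ε hε).u_pos t ht)).symm
      _ ≤ Real.exp ((φ0 ε + (v0 ε - μ) * t) / ε) := by
          apply Real.exp_le_exp.2
          have : (φ0 ε + (v0 ε - μ) * t) / ε = φ0 ε / ε + ε⁻¹ * (v0 ε - μ) * t := by
            field_simp
          rw [this]; exact hk
  refine ⟨parta, ?_, ?_⟩
  -- part (b)
  · intro t ht
    apply squeeze_zero' (g := fun ε => Real.exp (φ0 ε / ε))
    · filter_upwards [hεpos] with ε hε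
      exact le_of_lt ((hsol ε hε).u_pos t (le_of_lt ht))
    · filter_upwards [hεpos] with ε hε
      have := parta ε hε t (le_of_lt ht)
      refine this.trans (Real.exp_le_exp.2 ?_)
      have h1 : (v0 ε - μ) * t ≤ 0 :=
        mul_nonpos_of_nonpos_of_nonneg (by linarith [hv0μ ε hε]) (le_of_lt ht)
      exact (div_le_div_iff_of_pos_right hε.1).2 (by linarith)
    · exact hexp0
  -- part (c)
  · intro t ht
    have hv0lim : Tendsto (fun ε => v0 ε - vlim) (nhdsWithin 0 (Set.Ioc 0 1)) (𝓝 0) := by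
      simpa using hvconv.sub (tendsto_const_nhds (x := vlim))
    have hbound : Tendsto (fun ε => v0 ε * Real.exp (φ0 ε / ε) * t + |v0 ε - vlim|)
        (nhdsWithin 0 (Set.Ioc 0 1)) (𝓝 0) := by
      have h1 : Tendsto (fun ε => v0 ε * Real.exp (φ0 ε / ε) * t)
          (nhdsWithin 0 (Set.Ioc 0 1)) (𝓝 (vlim * 0 * t)) :=
        (hvconv.mul hexp0).mul tendsto_const_nhds
      have h2 := hv0lim.abs
      rw [abs_zero] at h2
      simpa using h1.add h2
    rw [show 𝓝 vlim = 𝓝 (0 + vlim) by rw [zero_add]]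
    have : Tendsto (fun ε => v ε t - vlim) (nhdsWithin 0 (Set.Ioc 0 1)) (𝓝 0) := by
      apply squeeze_zero_norm' _ hbound
      filter_upwards [hεpos] with ε hε
      have hεp : 0 < ε := hε.1
      have hv00 : v ε 0 = v0 ε := hv0 ε hε
      have hμ0 : v ε 0 ≤ μ := by rw [hv00]; exact le_of_lt (hv0μ ε hε)
      have hk := (key hεp (hsol ε hε) hμ0).2 t ht
      rw [hv00, hu0 ε hε] at hk
      calc ‖v ε t - vlim‖ = |v ε t - v0 ε + (v0 ε - vlim)| := by
            rw [Real.norm_eq_abs]; ring_nf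
        _ ≤ |v ε t - v0 ε| + |v0 ε - vlim| := abs_add_le _ _
        _ ≤ v0 ε * Real.exp (φ0 ε / ε) * t + |v0 ε - vlim| := by linarith
    simpa using this.add (tendsto_const_nhds (x := vlim))
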